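/- Let a < b be real numbers and let u : [a, b] → ℂ be continuously differentiable. Then (b − a)|u(b)|² ≤ ∫ₐᵇ |u(y)|² dy + (b − a) ∫ₐᵇ 2|u(y)||u′(y)| dy. -/

import Mathlib

open MeasureTheory intervalIntegral Set

/-- First displayed inequality in the proof of the trace estimate (Lemma 3.3):
for a continuously differentiable `u : [a, b] → ℂ`,
`(b − a)|u(b)|² ≤ ∫ₐᵇ |u(y)|² dy + (b − a) ∫ₐᵇ 2|u(y)||u′(y)| dy`. -/
theorem trace_first_inequality
    (a b : ℝ) (hab : a < b) (u u' : ℝ → ℂ)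
    (hderiv : ∀ y ∈ Set.Icc a b, HasDerivWithinAt u (u' y) (Set.Icc a b) y)
    (hcont : ContinuousOn u' (Set.Icc a b)) :
    (b - a) * ‖u b‖ ^ 2
      ≤ (∫ y in a..b, ‖u y‖ ^ 2)
        + (b - a) * ∫ y in a..b, 2 * ‖u y‖ * ‖u' y‖ := by
  have hucont : ContinuousOn u (Set.Icc a b) :=
    fun t ht => (hderiv t ht).continuousWithinAt
  set F : ℝ → ℝ := fun t => inner ℝ (u t) (u t) with hF
  set F' : ℝ → ℝ := fun t => inner ℝ (u t) (u' t) + inner ℝ (u' t) (u t) with hF'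
  set g : ℝ → ℝ := fun t => 2 * ‖u t‖ * ‖u' t‖ with hg
  have hFeq : ∀ t, F t = ‖u t‖ ^ 2 := fun t => real_inner_self_eq_norm_sq (u t)
  -- F' is continuous on Icc a b
  have hF'cont : ContinuousOn F' (Set.Icc a b) := by
    apply ContinuousOn.add
    · exact ContinuousOn.inner hucont hcont
    · exact ContinuousOn.inner hcont hucont
  have hgcont : ContinuousOn g (Set.Icc a b) := by
    apply ContinuousOn.mul
    · exact continuousOn_const.mul hucont.norm
    · exact hcont.norm
  have hgnonneg : ∀ t, 0 ≤ g t := fun t => by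
    simp only [hg]; positivity
  have hF'le : ∀ t, F' t ≤ g t := by
    intro t
    have h1 : inner ℝ (u t) (u' t) ≤ ‖u t‖ * ‖u' t‖ := real_inner_le_norm _ _
    have h2 : inner ℝ (u' t) (u t) ≤ ‖u t‖ * ‖u' t‖ := by
      calc (inner ℝ (u' t) (u t) : ℝ) ≤ ‖u' t‖ * ‖u t‖ := real_inner_le_norm _ _
        _ = ‖u t‖ * ‖u' t‖ := mul_comm _ _
    simp only [hF', hg]; linarith
  set C : ℝ := ∫ t in a..b, g t with hC
  have hgint : IntervalIntegrable g volume a b :=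
    hgcont.intervalIntegrable_of_Icc hab.le
  -- Pointwise estimate
  have key : ∀ y ∈ Set.Icc a b, ‖u b‖ ^ 2 ≤ ‖u y‖ ^ 2 + C := by
    intro y hy
    have hyb : y ≤ b := hy.2
    have hsub : Set.Icc y b ⊆ Set.Icc a b := Set.Icc_subset_Icc hy.1 le_rfl
    have hFc : ContinuousOn F (Set.Icc y b) :=
      ((hucont.mono hsub).inner (hucont.mono hsub))
    have hFd : ∀ x ∈ Set.Ioo y b, HasDerivWithinAt F (F' x) (Set.Ioi x) x := by
      intro x hx
      have hx' : x ∈ Set.Icc a b := hsub (Set.Ioo_subset_Icc_self hx)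
      have hd : HasDerivWithinAt F (F' x) (Set.Icc a b) x :=
        (hderiv x hx').inner ℝ (hderiv x hx')
      apply hd.mono_of_mem_nhdsWithin
      apply mem_nhdsWithin_of_mem_nhds
      apply Icc_mem_nhds (lt_of_le_of_lt hy.1 hx.1) hx.2
    have hF'int : IntervalIntegrable F' volume y b :=
      (hF'cont.mono hsub).intervalIntegrable_of_Icc hyb
    have hFTC : ∫ t in y..b, F' t = F b - F y :=
      integral_eq_sub_of_hasDeriv_right_of_le hyb hFc hFd hF'int
    have hgint' : IntervalIntegrable g volume y b :=
      (hgcont.mono hsub).intervalIntegrable_of_Icc hyb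
    have h1 : ∫ t in y..b, F' t ≤ ∫ t in y..b, g t :=
      integral_mono_on hyb hF'int hgint' (fun t _ => hF'le t)
    have h2 : ∫ t in y..b, g t ≤ C := by
      rw [hC]
      exact integral_mono_interval hy.1 hyb le_rfl
        (Filter.Eventually.of_forall (fun t => hgnonneg t)) hgint
    have := hFTC ▸ (h1.trans h2)
    rw [hFeq b, hFeq y] at this
    linarith
  -- Integrate the pointwise estimate over [a, b]
  have hconst : IntervalIntegrable (fun _ : ℝ => ‖u b‖ ^ 2) volume a b :=
    intervalIntegrable_const
  have hrhsint : IntervalIntegrable (fun y => ‖u y‖ ^ 2 + C) volume a b := by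
    apply IntervalIntegrable.add _ intervalIntegrable_const
    exact ((hucont.norm.pow 2)).intervalIntegrable_of_Icc hab.le
  have hmono : ∫ _ in a..b, ‖u b‖ ^ 2 ≤ ∫ y in a..b, (‖u y‖ ^ 2 + C) :=
    integral_mono_on hab.le hconst hrhsint (fun y hy => key y hy)
  have hL : ∫ _ in a..b, ‖u b‖ ^ 2 = (b - a) * ‖u b‖ ^ 2 := by
    simp [smul_eq_mul]
  have hR : ∫ y in a..b, (‖u y‖ ^ 2 + C)
      = (∫ y in a..b, ‖u y‖ ^ 2) + (b - a) * C := by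
    rw [integral_add (f := fun y => ‖u y‖ ^ 2) (g := fun _ => C) (((hucont.norm.pow 2)).intervalIntegrable_of_Icc hab.le)
      intervalIntegrable_const]
    simp [smul_eq_mul]
  rw [hL, hR] at hmono
  exact hmono
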